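/- Let (X,d) be a complete Busemann convex geodesic space that is additionally δ-hyperbolic, let λ ≥ 1, and let M ≥ 0 be such that every λ-quasi-geodesic triangle in X is M-slim. If a closed convex subset A ⊆ X contains a k-local λ-quasi-geodesic ray with k > 8λM, then A contains a geodesic ray. -/

import Mathlib

open Set Filter Metric

section Defs

variable {X : Type*} [MetricSpace X]

/-- A unit-speed geodesic defined on `[a, b]`. -/
def IsGeodesicOn (γ : ℝ → X) (a b : ℝ) : Prop :=
  ∀ s ∈ Set.Icc a b, ∀ t ∈ Set.Icc a b, dist (γ s) (γ t) = |s - t|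

/-- `S` is a geodesic segment joining `x` and `y`. -/
def IsGeodesicSegment (S : Set X) (x y : X) : Prop :=
  ∃ (a b : ℝ) (γ : ℝ → X), a ≤ b ∧ IsGeodesicOn γ a b ∧ γ a = x ∧ γ b = y ∧
    S = γ '' Set.Icc a b

/-- A geodesic space: every two points are joined by a geodesic segment. -/
def GeodesicSpace (X : Type*) [MetricSpace X] : Prop :=
  ∀ x y : X, ∃ S : Set X, IsGeodesicSegment S x y

/-- A uniquely geodesic space. -/
def UniquelyGeodesic (X : Type*) [MetricSpace X] : Prop :=
  ∀ x y : X, ∃! S : Set X, IsGeodesicSegment S x y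

/-- `S` is contained in the closed `M`-neighborhood of `T`. -/
def InClosedNbhd (S T : Set X) (M : ℝ) : Prop :=
  ∀ p ∈ S, ∃ q ∈ T, dist p q ≤ M

/-- A triangle with sides `S1, S2, S3` is `M`-slim. -/
def SlimTriangle (S1 S2 S3 : Set X) (M : ℝ) : Prop :=
  InClosedNbhd S1 (S2 ∪ S3) M ∧ InClosedNbhd S2 (S1 ∪ S3) M ∧ InClosedNbhd S3 (S1 ∪ S2) M

/-- `X` is `δ`-hyperbolic: every geodesic triangle is `δ`-slim. -/
def DeltaHyperbolic (X : Type*) [MetricSpace X] (δ : ℝ) : Prop :=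
  ∀ x y z : X, ∀ S1 S2 S3 : Set X,
    IsGeodesicSegment S1 x y → IsGeodesicSegment S2 y z → IsGeodesicSegment S3 z x →
    SlimTriangle S1 S2 S3 δ

/-- A geodesic ray `γ : [0, ∞) → X`. -/
def IsGeodesicRay (γ : ℝ → X) : Prop :=
  ∀ s ∈ Set.Ici (0:ℝ), ∀ t ∈ Set.Ici (0:ℝ), dist (γ s) (γ t) = |s - t|

/-- A set is geodesically bounded if it contains no geodesic ray. -/
def GeodesicallyBounded (A : Set X) : Prop :=
  ¬ ∃ γ : ℝ → X, IsGeodesicRay γ ∧ ∀ t ∈ Set.Ici (0:ℝ), γ t ∈ A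

/-- A directional curve `γ : [0, ∞) → X` (with some constant `b ≥ 0`). -/
def IsDirectionalCurve (γ : ℝ → X) : Prop :=
  ∃ b : ℝ, 0 ≤ b ∧ ∀ s ∈ Set.Ici (0:ℝ), ∀ t ∈ Set.Ici (0:ℝ),
    |s - t| - b ≤ dist (γ s) (γ t) ∧ dist (γ s) (γ t) ≤ |s - t|

/-- A set is directionally bounded if it contains no directional curve. -/
def DirectionallyBounded (A : Set X) : Prop :=
  ¬ ∃ γ : ℝ → X, IsDirectionalCurve γ ∧ ∀ t ∈ Set.Ici (0:ℝ), γ t ∈ A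

/-- A subset of a geodesic space is convex if every geodesic segment joining two of its
points is contained in it. -/
def GeodesicConvex (A : Set X) : Prop :=
  ∀ x ∈ A, ∀ y ∈ A, ∀ S : Set X, IsGeodesicSegment S x y → S ⊆ A

/-- The comparison point in the Euclidean plane: the point on the segment from `x'` to `y'`
(of length `L`) at distance `t` from `x'`. -/
noncomputable def cmpPt (x' y' : EuclideanSpace ℝ (Fin 2)) (L t : ℝ) :
    EuclideanSpace ℝ (Fin 2) :=
  AffineMap.lineMap x' y' (t / L)

/-- `X` is a CAT(0) space: it is geodesic and for every geodesic triangle and every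
comparison triangle in the Euclidean plane, distances between points on the triangle are
bounded by the distances between the corresponding comparison points. -/
def CAT0Space (X : Type*) [MetricSpace X] : Prop :=
  GeodesicSpace X ∧
  ∀ (x y z : X) (γ1 γ2 γ3 : ℝ → X),
    IsGeodesicOn γ1 0 (dist x y) → γ1 0 = x → γ1 (dist x y) = y →
    IsGeodesicOn γ2 0 (dist y z) → γ2 0 = y → γ2 (dist y z) = z →
    IsGeodesicOn γ3 0 (dist z x) → γ3 0 = z → γ3 (dist z x) = x →
    ∀ x' y' z' : EuclideanSpace ℝ (Fin 2),
      dist x' y' = dist x y → dist y' z' = dist y z → dist z' x' = dist z x →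
      (∀ s ∈ Set.Icc (0:ℝ) (dist x y), ∀ t ∈ Set.Icc (0:ℝ) (dist y z),
        dist (γ1 s) (γ2 t) ≤ dist (cmpPt x' y' (dist x y) s) (cmpPt y' z' (dist y z) t)) ∧
      (∀ s ∈ Set.Icc (0:ℝ) (dist y z), ∀ t ∈ Set.Icc (0:ℝ) (dist z x),
        dist (γ2 s) (γ3 t) ≤ dist (cmpPt y' z' (dist y z) s) (cmpPt z' x' (dist z x) t)) ∧
      (∀ s ∈ Set.Icc (0:ℝ) (dist z x), ∀ t ∈ Set.Icc (0:ℝ) (dist x y),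
        dist (γ3 s) (γ1 t) ≤ dist (cmpPt z' x' (dist z x) s) (cmpPt x' y' (dist x y) t))

/-- Busemann convexity. -/
def BusemannConvex (X : Type*) [MetricSpace X] : Prop :=
  GeodesicSpace X ∧
  ∀ (a b c d : ℝ) (γ σ : ℝ → X), a ≤ b → c ≤ d →
    IsGeodesicOn γ a b → IsGeodesicOn σ c d →
    ∀ t ∈ Set.Icc (0:ℝ) 1,
      dist (γ ((1-t)*a + t*b)) (σ ((1-t)*c + t*d)) ≤
        (1-t) * dist (γ a) (σ c) + t * dist (γ b) (σ d)

/-- A `(lam, eps)`-quasi-geodesic defined on `[a, b]`. -/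
def IsQuasiGeodesicOn (lam eps : ℝ) (γ : ℝ → X) (a b : ℝ) : Prop :=
  ∀ s ∈ Set.Icc a b, ∀ t ∈ Set.Icc a b,
    (1/lam) * |s - t| - eps ≤ dist (γ s) (γ t) ∧ dist (γ s) (γ t) ≤ lam * |s - t| + eps

/-- A `(lam, eps)`-quasi-geodesic ray. -/
def IsQuasiGeodesicRay (lam eps : ℝ) (γ : ℝ → X) : Prop :=
  ∀ s ∈ Set.Ici (0:ℝ), ∀ t ∈ Set.Ici (0:ℝ),
    (1/lam) * |s - t| - eps ≤ dist (γ s) (γ t) ∧ dist (γ s) (γ t) ≤ lam * |s - t| + eps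

/-- A `k`-local `lam`-quasi-geodesic ray: a `(lam, eps)`-quasi-geodesic ray locally,
for every `eps > 0`. -/
def IsLocalQuasiGeodesicRay (k lam : ℝ) (γ : ℝ → X) : Prop :=
  ∀ eps > (0:ℝ), ∀ s ∈ Set.Ici (0:ℝ), ∀ t ∈ Set.Ici (0:ℝ), |s - t| ≤ k →
    (1/lam) * |s - t| - eps ≤ dist (γ s) (γ t) ∧ dist (γ s) (γ t) ≤ lam * |s - t| + eps

/-- `S` is the image of a `lam`-quasi-geodesic joining `x` and `y`
(i.e. a `(lam, eps)`-quasi-geodesic for every `eps > 0`). -/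
def IsQuasiGeodesicSegment (lam : ℝ) (S : Set X) (x y : X) : Prop :=
  ∃ (a b : ℝ) (γ : ℝ → X), a ≤ b ∧ (∀ eps > (0:ℝ), IsQuasiGeodesicOn lam eps γ a b) ∧
    γ a = x ∧ γ b = y ∧ S = γ '' Set.Icc a b

/-- Every `lam`-quasi-geodesic triangle in `X` is `M`-slim. -/
def QuasiGeodesicTrianglesSlim (X : Type*) [MetricSpace X] (lam M : ℝ) : Prop :=
  ∀ x y z : X, ∀ S1 S2 S3 : Set X,
    IsQuasiGeodesicSegment lam S1 x y → IsQuasiGeodesicSegment lam S2 y z →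
    IsQuasiGeodesicSegment lam S3 z x → SlimTriangle S1 S2 S3 M

/-- A play of the Lion-Man game in `A` with speed `D`. -/
def IsLionManPlay (A : Set X) (D : ℝ) (L M : ℕ → X) : Prop :=
  (∀ n, L n ∈ A) ∧ (∀ n, M n ∈ A) ∧
  (∀ n, ∃ S : Set X, IsGeodesicSegment S (L n) (M n) ∧ L (n+1) ∈ S) ∧
  (∀ n, dist (L n) (L (n+1)) = min D (dist (L n) (M n))) ∧
  (∀ n, dist (M n) (M (n+1)) ≤ D)

/-- The lion wins a play if `d(L_{n+1}, M_n) → 0`. -/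
def LionWins (L M : ℕ → X) : Prop :=
  Filter.Tendsto (fun n => dist (L (n+1)) (M n)) Filter.atTop (nhds 0)

/-- The lion always wins the Lion-Man game played in `A`. -/
def LionAlwaysWins (A : Set X) : Prop :=
  ∀ D > (0:ℝ), ∀ L M : ℕ → X, IsLionManPlay A D L M → LionWins L M

end Defs

section Aux2
variable {X : Type*} [MetricSpace X]

lemma geodesicOn_sub {σ : ℝ → X} {a b a' b' : ℝ} (h : IsGeodesicOn σ a b)
    (h1 : a ≤ a') (h2 : b' ≤ b) : IsGeodesicOn σ a' b' :=
  fun s hs t ht => h s ⟨h1.trans hs.1, hs.2.trans h2⟩ t ⟨h1.trans ht.1, ht.2.trans h2⟩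

lemma unit_geodesic (hgs : GeodesicSpace X) (x y : X) :
    ∃ σ : ℝ → X, IsGeodesicOn σ 0 (dist x y) ∧ σ 0 = x ∧ σ (dist x y) = y := by
  obtain ⟨S, a, b, γ0, hab, hg, ha, hb, -⟩ := hgs x y
  have hd : dist x y = b - a := by
    rw [← ha, ← hb, hg a ⟨le_refl a, hab⟩ b ⟨hab, le_refl b⟩]
    rw [abs_of_nonpos (by linarith)]; ring
  refine ⟨fun t => γ0 (a + t), ?_, by simpa, ?_⟩
  · intro s hs t ht
    rw [hd] at hs ht
    have := hg (a+s) ⟨by linarith [hs.1], by linarith [hs.2]⟩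
      (a+t) ⟨by linarith [ht.1], by linarith [ht.2]⟩
    rw [show a+s-(a+t) = s - t by ring] at this
    exact this
  · show γ0 (a + dist x y) = y
    rw [hd, show a + (b - a) = b by ring]; exact hb

lemma geodesic_segment_of_geo {σ : ℝ → X} {L : ℝ} (hL : 0 ≤ L)
    (hg : IsGeodesicOn σ 0 L) : IsGeodesicSegment (σ '' Set.Icc 0 L) (σ 0) (σ L) :=
  ⟨0, L, σ, hL, hg, rfl, rfl, rfl⟩

lemma geodesic_segment_symm {S : Set X} {x y : X} (h : IsGeodesicSegment S x y) :
    IsGeodesicSegment S y x := by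
  obtain ⟨a, b, γ0, hab, hg, ha, hb, hS⟩ := h
  refine ⟨a, b, fun t => γ0 (a + b - t), hab, ?_, by simpa, by simpa, ?_⟩
  · intro s hs t ht
    have := hg (a+b-s) ⟨by linarith [hs.2], by linarith [hs.1]⟩
      (a+b-t) ⟨by linarith [ht.2], by linarith [ht.1]⟩
    rw [show a+b-s-(a+b-t) = t - s by ring] at this
    rw [this, abs_sub_comm]
  · rw [hS, show (fun t => γ0 (a + b - t)) = γ0 ∘ (fun t => a + b - t) from rfl,
      Set.image_comp, Set.image_const_sub_Icc, show a + b - b = a by ring,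
      show a + b - a = b by ring]

lemma qgs_of_geodesic {σ : ℝ → X} {L lam : ℝ} (hlam : 1 ≤ lam) (hL : 0 ≤ L)
    (hg : IsGeodesicOn σ 0 L) :
    IsQuasiGeodesicSegment lam (σ '' Set.Icc 0 L) (σ 0) (σ L) := by
  refine ⟨0, L, σ, hL, ?_, rfl, rfl, rfl⟩
  intro eps heps s hs t ht
  rw [hg s hs t ht]
  have h0 : (0:ℝ) < lam := by linarith
  have h1 : (1/lam) * |s - t| ≤ |s-t| := by
    apply mul_le_of_le_one_left (abs_nonneg _)
    rw [div_le_one h0]; exact hlam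
  constructor
  · linarith
  · nlinarith [abs_nonneg (s - t)]

lemma qgs_of_geodesic_rev {σ : ℝ → X} {L lam : ℝ} (hlam : 1 ≤ lam) (hL : 0 ≤ L)
    (hg : IsGeodesicOn σ 0 L) :
    IsQuasiGeodesicSegment lam (σ '' Set.Icc 0 L) (σ L) (σ 0) := by
  have hrev : IsGeodesicOn (fun t => σ (L - t)) 0 L := by
    intro s hs t ht
    have := hg (L-s) ⟨by linarith [hs.2], by linarith [hs.1]⟩
      (L-t) ⟨by linarith [ht.2], by linarith [ht.1]⟩
    rw [show L-s-(L-t) = t - s by ring] at this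
    rw [this, abs_sub_comm]
  have him : (fun t => σ (L - t)) '' Set.Icc 0 L = σ '' Set.Icc 0 L := by
    rw [show (fun t => σ (L - t)) = σ ∘ (fun t => L - t) from rfl,
      Set.image_comp, Set.image_const_sub_Icc, sub_zero, sub_self]
  have := qgs_of_geodesic (σ := fun t => σ (L - t)) hlam hL hrev
  rw [him] at this
  simpa using this

end Aux2

set_option maxHeartbeats 2000000 in
/-- In a complete Busemann convex space that is additionally `δ`-hyperbolic, where every
`λ`-quasi-geodesic triangle is `M`-slim, if a closed convex set contains a `k`-local
`λ`-quasi-geodesic ray with `k > 8λM`, then it contains a geodesic ray. -/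
theorem stmt6 {X : Type*} [MetricSpace X] [CompleteSpace X]
    (hB : BusemannConvex X) (δ : ℝ) (hδ : 0 ≤ δ) (hhyp : DeltaHyperbolic X δ)
    (lam M k : ℝ) (hlam : 1 ≤ lam) (hM : 0 ≤ M)
    (hslim : QuasiGeodesicTrianglesSlim X lam M)
    (A : Set X) (hclosed : IsClosed A) (hconv : GeodesicConvex A)
    (γ : ℝ → X) (hk : k > 8 * lam * M) (hγ : IsLocalQuasiGeodesicRay k lam γ)
    (hγA : ∀ t ∈ Set.Ici (0:ℝ), γ t ∈ A) :
    ∃ σ : ℝ → X, IsGeodesicRay σ ∧ ∀ t ∈ Set.Ici (0:ℝ), σ t ∈ A := by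
  classical
  obtain ⟨hgs, hBu⟩ := hB
  have hlam0 : (0:ℝ) < lam := by linarith
  have hk0 : (0:ℝ) < k := lt_of_le_of_lt (by positivity) hk
  set h : ℝ := k / 2 with hh
  have hh0 : 0 < h := by positivity
  -- clean local quasi-geodesic bounds
  have hlow : ∀ s t : ℝ, 0 ≤ s → 0 ≤ t → |s - t| ≤ k →
      (1/lam) * |s - t| ≤ dist (γ s) (γ t) := by
    intro s t hs ht hst
    by_contra hcon
    push_neg at hcon
    have := (hγ (((1/lam)*|s-t| - dist (γ s) (γ t))/2) (by linarith) s hs t ht hst).1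
    linarith
  have hup : ∀ s t : ℝ, 0 ≤ s → 0 ≤ t → |s - t| ≤ k →
      dist (γ s) (γ t) ≤ lam * |s - t| := by
    intro s t hs ht hst
    by_contra hcon
    push_neg at hcon
    have := (hγ ((dist (γ s) (γ t) - lam * |s - t|)/2) (by linarith) s hs t ht hst).2
    linarith
  choose G hG hGx hGy using unit_geodesic hgs
  set p : X := γ 0 with hp
  set y : ℕ → X := fun n => γ ((n:ℝ) * h) with hy
  set D : ℕ → ℝ := fun n => dist p (y n) with hD
  set ss : ℕ → ℝ → X := fun n => G p (y n) with hss
  have hssgeo : ∀ n, IsGeodesicOn (ss n) 0 (D n) := fun n => hG p (y n)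
  have hss0 : ∀ n, ss n 0 = p := fun n => hGx p (y n)
  have hssD : ∀ n, ss n (D n) = y n := fun n => hGy p (y n)
  have hD0 : ∀ n, 0 ≤ D n := fun n => dist_nonneg
  have hpy0 : p = y 0 := by simp [hy, hp]
  have hyA : ∀ n, y n ∈ A := fun n => hγA _ (by simp only [Set.mem_Ici]; positivity)
  -- adjacent distances
  have habs : ∀ n : ℕ, |(n:ℝ)*h - ((n:ℝ)+1)*h| = h := by
    intro n
    rw [show (n:ℝ)*h - ((n:ℝ)+1)*h = -h by ring, abs_neg, abs_of_pos hh0]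
  have hycast : ∀ n : ℕ, y (n+1) = γ (((n:ℝ)+1) * h) := by
    intro n; simp only [hy, Nat.cast_add, Nat.cast_one]
  have hadj_low : ∀ n : ℕ, (1/lam) * h ≤ dist (y n) (y (n+1)) := by
    intro n
    have := hlow ((n:ℝ)*h) (((n:ℝ)+1)*h) (by positivity) (by positivity)
      (by rw [habs n]; linarith)
    rw [habs n] at this
    simp only [hy]; push_cast; exact this
  have hadj_up : ∀ n : ℕ, dist (y n) (y (n+1)) ≤ lam * h := by
    intro n
    have := hup ((n:ℝ)*h) (((n:ℝ)+1)*h) (by positivity) (by positivity)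
      (by rw [habs n]; linarith)
    rw [habs n] at this
    simp only [hy]; push_cast; exact this
  obtain ⟨c, hcdef⟩ : ∃ c : ℝ, c = (1/lam) * h - 2*M := ⟨_, rfl⟩
  have hc : 0 < c := by
    have h4 : 4 * lam * M < h := by rw [hh]; linarith
    have h5 : 1/lam * (4*lam*M) < 1/lam * h :=
      mul_lt_mul_of_pos_left h4 (by positivity)
    have h6 : 1/lam * (4*lam*M) = 4*M := by field_simp
    rw [hcdef]; linarith
  -- key quasi-geodesic segment fact for pieces of γ of length 2h
  have hqgsMid : ∀ n : ℕ, IsQuasiGeodesicSegment lam (γ '' Set.Icc ((n:ℝ)*h) (((n:ℝ)+2)*h))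
      (y n) (y (n+2)) := by
    intro n
    refine ⟨(n:ℝ)*h, ((n:ℝ)+2)*h, γ, by nlinarith, ?_, rfl, ?_, rfl⟩
    · intro eps heps s hs t ht
      refine hγ eps heps s ?_ t ?_ ?_
      · exact Set.mem_Ici.mpr (le_trans (by positivity) hs.1)
      · exact Set.mem_Ici.mpr (le_trans (by positivity) ht.1)
      · rw [abs_le]
        constructor <;> [linarith [hs.1, ht.2]; linarith [hs.2, ht.1]]
    · simp only [hy]; push_cast; ring_nf
  have hqgsGeo : ∀ n : ℕ, IsQuasiGeodesicSegment lam (ss n '' Set.Icc 0 (D n)) p (y n) := by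
    intro n
    have := qgs_of_geodesic (lam := lam) hlam (hD0 n) (hssgeo n)
    rwa [hss0, hssD] at this
  have hqgsGeoRev : ∀ n : ℕ, IsQuasiGeodesicSegment lam (ss n '' Set.Icc 0 (D n)) (y n) p := by
    intro n
    have := qgs_of_geodesic_rev (lam := lam) hlam (hD0 n) (hssgeo n)
    rwa [hss0, hssD] at this
  have hsegGeo : ∀ n : ℕ, IsGeodesicSegment (ss n '' Set.Icc 0 (D n)) p (y n) := by
    intro n
    have := geodesic_segment_of_geo (hD0 n) (hssgeo n)
    rwa [hss0, hssD] at this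
  have hdistp : ∀ n : ℕ, ∀ u ∈ Set.Icc 0 (D n), dist p (ss n u) = u := by
    intro n u hu
    rw [← hss0 n]
    rw [hssgeo n 0 ⟨le_refl _, hD0 n⟩ u hu, abs_of_nonpos (by linarith [hu.1])]
    linarith
  have hdisty : ∀ n : ℕ, ∀ u ∈ Set.Icc 0 (D n), dist (y n) (ss n u) = D n - u := by
    intro n u hu
    rw [← hssD n]
    rw [hssgeo n (D n) ⟨hD0 n, le_refl _⟩ u hu, abs_of_nonneg (by linarith [hu.2])]
  -- L1: progress lemma
  have L1 : ∀ n : ℕ, D n + c ≤ D (n+1) := by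
    intro n
    induction n with
    | zero =>
      have hb : D 0 = 0 := by rw [hD]; simp [← hpy0]
      have hlow1 := hadj_low 0
      rw [← hpy0] at hlow1
      have hD1 : D (0+1) = dist p (y (0+1)) := by rw [hD]
      rw [hcdef]
      linarith
    | succ n IH =>
      obtain ⟨q', hq'mem, hq'd⟩ :=
        (hslim p (y n) (y (n+2)) _ _ _ (hqgsGeo n) (hqgsMid n) (hqgsGeoRev (n+2))).2.1
        (y (n+1)) ⟨((n:ℝ)+1)*h, ⟨by nlinarith, by nlinarith⟩, (hycast n).symm⟩
      rcases hq'mem with hmem | hmem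
      · exfalso
        obtain ⟨u, hu, rfl⟩ := hmem
        have d1 := hdistp n u hu
        have d2 := hdisty n u hu
        have t1 : dist (y n) (y (n+1)) ≤ (D n - u) + M := by
          calc dist (y n) (y (n+1)) ≤ dist (y n) (ss n u) + dist (ss n u) (y (n+1)) :=
                dist_triangle _ _ _
          _ ≤ (D n - u) + M := by rw [d2]; linarith [dist_comm (y (n+1)) (ss n u) ▸ hq'd]
        have t2 : D (n+1) ≤ u + M := by
          calc D (n+1) = dist p (y (n+1)) := by rw [hD]
          _ ≤ dist p (ss n u) + dist (ss n u) (y (n+1)) := dist_triangle _ _ _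
          _ ≤ u + M := by rw [d1]; linarith [dist_comm (y (n+1)) (ss n u) ▸ hq'd]
        have t3 := hadj_low n
        linarith
      · obtain ⟨u, hu, rfl⟩ := hmem
        have d1 := hdistp (n+2) u hu
        have d2 := hdisty (n+2) u hu
        have t1 : D (n+1) ≤ u + M := by
          calc D (n+1) = dist p (y (n+1)) := by rw [hD]
          _ ≤ dist p (ss (n+2) u) + dist (ss (n+2) u) (y (n+1)) := dist_triangle _ _ _
          _ ≤ u + M := by rw [d1]; linarith [dist_comm (y (n+1)) (ss (n+2) u) ▸ hq'd]
        have t2 : dist (y (n+1)) (y (n+2)) ≤ M + (D (n+2) - u) := by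
          calc dist (y (n+1)) (y (n+2)) ≤
              dist (y (n+1)) (ss (n+2) u) + dist (ss (n+2) u) (y (n+2)) := dist_triangle _ _ _
          _ ≤ M + (D (n+2) - u) := by
              rw [dist_comm (ss (n+2) u) (y (n+2)), d2]; linarith
        have t3 := hadj_low (n+1)
        rw [hcdef]
        linarith
  have hDmono : Monotone D := monotone_nat_of_le_succ (fun n => by linarith [L1 n, hc])
  have hDge : ∀ n : ℕ, c * n ≤ D n := by
    intro n
    induction n with
    | zero => simp [hD, ← hpy0]
    | succ n IH =>
      have := L1 n
      push_cast
      linarith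
  -- chords between chain points
  have hchord : ∀ i j : ℕ, IsGeodesicSegment
      (G (y i) (y j) '' Set.Icc 0 (dist (y i) (y j))) (y i) (y j) := by
    intro i j
    have := geodesic_segment_of_geo (dist_nonneg (x := y i) (y := y j)) (hG (y i) (y j))
    rwa [hGx, hGy] at this
  -- dyadic lemma, balanced version
  have DY1 : ∀ t : ℕ, ∀ i g : ℕ, 1 ≤ g → g ≤ 2^t → ∀ S : Set X,
      IsGeodesicSegment S (y i) (y (i+g)) → ∀ q ∈ S,
      c * i - lam * h - δ * t ≤ dist p q := by
    intro t
    induction t with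
    | zero =>
      intro i g hg1 hg2 S hS q hq
      have hgeq : g = 1 := le_antisymm (by simpa using hg2) hg1
      subst hgeq
      obtain ⟨a, b, γ0, hab, hgeo, ha, hb, hSeq⟩ := hS
      rw [hSeq] at hq
      obtain ⟨u, hu, rfl⟩ := hq
      have hba : dist (y i) (y (i+1)) = b - a := by
        rw [← ha, ← hb, hgeo a ⟨le_refl _, hab⟩ b ⟨hab, le_refl _⟩,
          abs_of_nonpos (by linarith)]
        ring
      have hyq : dist (y i) (γ0 u) ≤ lam * h := by
        rw [← ha, hgeo a ⟨le_refl _, hab⟩ u hu, abs_of_nonpos (by linarith [hu.1])]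
        have := hadj_up i
        rw [hba] at this
        linarith [hu.2]
      have hDi := hDge i
      have htr : D i ≤ dist p (γ0 u) + dist (y i) (γ0 u) := by
        rw [hD]
        calc dist p (y i) ≤ dist p (γ0 u) + dist (γ0 u) (y i) := dist_triangle _ _ _
        _ = dist p (γ0 u) + dist (y i) (γ0 u) := by rw [dist_comm (γ0 u) (y i)]
      push_cast
      linarith
    | succ t IH =>
      intro i g hg1 hg2 S hS q hq
      by_cases hle : g ≤ 2^t
      · have := IH i g hg1 hle S hS q hq
        have hcast : δ * (t:ℝ) ≤ δ * ((t:ℕ)+1 : ℕ) := by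
          push_cast
          nlinarith
        push_cast at *
        linarith
      · push_neg at hle
        have hsum : i + 2^t + (g - 2^t) = i + g := by omega
        have h1le : 1 ≤ g - 2^t := by omega
        have h2le : g - 2^t ≤ 2^t := by
          have : (2:ℕ)^(t+1) = 2^t + 2^t := by ring
          omega
        have hS'' : IsGeodesicSegment
            (G (y (i+2^t)) (y (i+g)) '' Set.Icc 0 (dist (y (i+2^t)) (y (i+g))))
            (y (i+2^t)) (y ((i+2^t)+(g-2^t))) := by
          rw [hsum]; exact hchord (i+2^t) (i+g)
        obtain ⟨q', hmem, hdq⟩ :=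
          (hhyp (y i) (y (i+2^t)) (y (i+g)) _ _ S (hchord i (i+2^t))
            (hsum ▸ hS'') (geodesic_segment_symm hS)).2.2 q hq
        have htr : dist p q' ≤ dist p q + δ := by
          calc dist p q' ≤ dist p q + dist q q' := dist_triangle _ _ _
          _ ≤ dist p q + δ := by linarith
        rcases hmem with hmem | hmem
        · have := IH i (2^t) (Nat.one_le_two_pow) (le_refl _) _ (hchord i (i+2^t)) q' hmem
          push_cast at *
          linarith
        · have := IH (i+2^t) (g-2^t) h1le h2le _ hS'' q' hmem
          have hcast : ((i + 2^t : ℕ):ℝ) = (i:ℝ) + (2:ℝ)^t := by push_cast; ring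
          rw [hcast] at this
          have hc2 : c * ((i:ℝ)) ≤ c * ((i:ℝ) + (2:ℝ)^t) := by nlinarith [mul_nonneg hc.le (pow_nonneg (by norm_num : (0:ℝ) ≤ 2) t)]
          have hgc : ((t+1:ℕ):ℝ) = (t:ℝ)+1 := by push_cast; ring
          push_cast
          linarith
  -- the uniform chord-avoidance constant
  obtain ⟨e, he1, hce⟩ : ∃ e : ℕ, 1 ≤ e ∧ δ ≤ c * e := by
    refine ⟨⌈δ/c⌉₊ + 1, le_add_self, ?_⟩
    have h1 : δ/c ≤ (⌈δ/c⌉₊ : ℝ) := Nat.le_ceil _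
    have h2 : δ/c * c = δ := by field_simp
    push_cast
    nlinarith
  have hee : e ≤ 2^e := (Nat.lt_two_pow_self (n := e)).le
  obtain ⟨C3, hC3⟩ : ∃ C3 : ℝ, C3 = lam * h + δ * e + δ := ⟨_, rfl⟩
  have hC30 : 0 ≤ C3 := by
    rw [hC3]
    have : 0 ≤ lam * h := by positivity
    have : 0 ≤ δ * e := by positivity
    linarith
  have DY : ∀ g i : ℕ, 1 ≤ g → ∀ S : Set X,
      IsGeodesicSegment S (y i) (y (i+g)) → ∀ q ∈ S,
      c * i - C3 ≤ dist p q := by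
    intro g
    induction g using Nat.strong_induction_on with
    | _ g IHg =>
    intro i hg1 S hS q hq
    by_cases hge : g ≤ e
    · have := DY1 e i g hg1 (hge.trans hee) S hS q hq
      have : δ * (e:ℝ) + lam * h ≤ C3 := by rw [hC3]; linarith
      linarith [DY1 e i g hg1 (hge.trans hee) S hS q hq]
    · push_neg at hge
      have hsum : i + e + (g - e) = i + g := by omega
      have hS'' : IsGeodesicSegment
          (G (y (i+e)) (y (i+g)) '' Set.Icc 0 (dist (y (i+e)) (y (i+g))))
          (y (i+e)) (y ((i+e)+(g-e))) := by
        rw [hsum]; exact hchord (i+e) (i+g)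
      obtain ⟨q', hmem, hdq⟩ :=
        (hhyp (y i) (y (i+e)) (y (i+g)) _ _ S (hchord i (i+e))
          (hsum ▸ hS'') (geodesic_segment_symm hS)).2.2 q hq
      have htr : dist p q' ≤ dist p q + δ := by
        calc dist p q' ≤ dist p q + dist q q' := dist_triangle _ _ _
        _ ≤ dist p q + δ := by linarith
      rcases hmem with hmem | hmem
      · have := DY1 e i e he1 hee _ (hchord i (i+e)) q' hmem
        rw [hC3]
        linarith
      · have := IHg (g-e) (by omega) (i+e) (by omega) _ hS'' q' hmem
        have hcast : c * (((i:ℕ)+e : ℕ):ℝ) = c * i + c * e := by push_cast; ring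
        rw [hcast] at this
        linarith
  have FT : ∀ n m : ℕ, n ≤ m → ∀ T, 0 ≤ T → T ≤ D n → T + C3 + δ < c * n →
      dist (ss n T) (ss m T) ≤ 2*δ := by
    intro n m hnm T hT0 hTD hTc
    rcases eq_or_lt_of_le hnm with rfl | hlt
    · rw [dist_self]; linarith
    · obtain ⟨g, hg1, rfl⟩ : ∃ g, 1 ≤ g ∧ m = n + g := ⟨m - n, by omega, by omega⟩
      have hTm : T ≤ D (n+g) := hTD.trans (hDmono (by omega))
      obtain ⟨q', hmem, hdq⟩ :=
        (hhyp p (y n) (y (n+g)) _ _ _ (hsegGeo n) (hchord n (n+g))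
          (geodesic_segment_symm (hsegGeo (n+g)))).1
          (ss n T) ⟨T, ⟨hT0, hTD⟩, rfl⟩
      have dpT : dist p (ss n T) = T := hdistp n T ⟨hT0, hTD⟩
      rcases hmem with hmem | hmem
      · exfalso
        have hDY := DY g n hg1 _ (hchord n (n+g)) q' hmem
        have htr : dist p q' ≤ T + δ := by
          calc dist p q' ≤ dist p (ss n T) + dist (ss n T) q' := dist_triangle _ _ _
          _ ≤ T + δ := by rw [dpT]; linarith
        linarith
      · obtain ⟨u, hu, rfl⟩ := hmem
        have dpu : dist p (ss (n+g) u) = u := hdistp (n+g) u hu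
        have huT : |u - T| ≤ δ := by
          have h1 := abs_dist_sub_le (ss (n+g) u) (ss n T) p
          rw [dist_comm (ss (n+g) u) p, dist_comm (ss n T) p, dpu, dpT,
            dist_comm (ss (n+g) u) (ss n T)] at h1
          exact le_trans h1 hdq
        have hmu : dist (ss (n+g) u) (ss (n+g) T) = |u - T| :=
          hssgeo (n+g) u hu T ⟨hT0, hTm⟩
        calc dist (ss n T) (ss (n+g) T) ≤
            dist (ss n T) (ss (n+g) u) + dist (ss (n+g) u) (ss (n+g) T) :=
              dist_triangle _ _ _
        _ ≤ δ + δ := by rw [hmu]; exact add_le_add hdq huT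
        _ = 2*δ := by ring
  have BUS : ∀ n m : ℕ, n ≤ m → ∀ t T : ℝ, 0 ≤ t → t ≤ T → T ≤ D n → T + C3 + δ < c * n →
      dist (ss n t) (ss m t) ≤ t / T * (2*δ) := by
    intro n m hnm t T ht0 htT hTD hTc
    rcases eq_or_lt_of_le (ht0.trans htT) with hT0 | hT0
    · have ht : t = 0 := le_antisymm (by linarith) ht0
      rw [ht, hss0 n, hss0 m, dist_self]
      positivity
    · have hsub1 : IsGeodesicOn (ss n) 0 T := geodesicOn_sub (hssgeo n) le_rfl hTD
      have hsub2 : IsGeodesicOn (ss m) 0 T :=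
        geodesicOn_sub (hssgeo m) le_rfl (hTD.trans (hDmono hnm))
      have hmem : t/T ∈ Set.Icc (0:ℝ) 1 :=
        ⟨by positivity, by rw [div_le_one hT0]; exact htT⟩
      have hbus := hBu 0 T 0 T (ss n) (ss m) (by linarith) (by linarith) hsub1 hsub2 (t/T) hmem
      rw [show (1 - t/T) * 0 + t/T * T = t from by field_simp; ring] at hbus
      rw [hss0 n, hss0 m, dist_self] at hbus
      have hFT := FT n m hnm T (by linarith) hTD hTc
      have h2 : t/T * dist (ss n T) (ss m T) ≤ t/T * (2*δ) :=
        mul_le_mul_of_nonneg_left hFT (by positivity)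
      linarith
  have hCauchy : ∀ t : ℝ, 0 ≤ t → CauchySeq (fun n => ss n t) := by
    intro t ht0
    rw [Metric.cauchySeq_iff]
    intro ε hε
    obtain ⟨T0, hT0t, hT0d, hT0pos⟩ : ∃ T0 : ℝ, t ≤ T0 ∧ 2*δ*t < ε*T0 ∧ 0 < T0 := by
      refine ⟨max t (2*δ*t/ε) + 1, by linarith [le_max_left t (2*δ*t/ε)], ?_,
        by positivity⟩
      have h1 : 2*δ*t/ε < max t (2*δ*t/ε) + 1 := by linarith [le_max_right t (2*δ*t/ε)]
      calc 2*δ*t = (2*δ*t/ε) * ε := by field_simp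
      _ < (max t (2*δ*t/ε) + 1) * ε := mul_lt_mul_of_pos_right h1 hε
      _ = ε * (max t (2*δ*t/ε) + 1) := by ring
    obtain ⟨N, hN⟩ : ∃ N : ℕ, T0 + C3 + δ < c * N := by
      obtain ⟨N, hN⟩ := exists_nat_gt ((T0 + C3 + δ)/c)
      refine ⟨N, ?_⟩
      rw [div_lt_iff₀ hc] at hN
      linarith
    have key : ∀ n m : ℕ, N ≤ n → n ≤ m → dist (ss n t) (ss m t) < ε := by
      intro n m hNn hnm
      have hcN : c * N ≤ c * n := mul_le_mul_of_nonneg_left (Nat.cast_le.mpr hNn) hc.le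
      have hcn : T0 + C3 + δ < c * n := lt_of_lt_of_le hN hcN
      have hTD : T0 ≤ D n := by
        have := hDge n
        linarith [hC30, hδ]
      have hb := BUS n m hnm t T0 ht0 hT0t hTD hcn
      have hlt : t/T0*(2*δ) < ε := by
        rw [div_mul_eq_mul_div, div_lt_iff₀ hT0pos]
        calc t * (2*δ) = 2*δ*t := by ring
        _ < ε * T0 := hT0d
      linarith
    refine ⟨N, fun a ha b hb => ?_⟩
    rcases le_total a b with hab | hab
    · exact key a b ha hab
    · rw [dist_comm]; exact key b a hb hab 
  have hex : ∀ t : ℝ, 0 ≤ t → ∃ x : X, Filter.Tendsto (fun n => ss n t) Filter.atTop (nhds x) :=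
    fun t ht => cauchySeq_tendsto_of_complete (hCauchy t ht)
  have : Nonempty X := ⟨p⟩
  choose! σF hσF using hex
  have hev : ∀ s : ℝ, 0 ≤ s → ∃ N : ℕ, ∀ n ≥ N, s ≤ D n := by
    intro s hs
    obtain ⟨N, hN⟩ := exists_nat_gt (s/c)
    refine ⟨N, fun n hn => ?_⟩
    rw [div_lt_iff₀ hc] at hN
    have h2 : c * N ≤ c * n := mul_le_mul_of_nonneg_left (Nat.cast_le.mpr hn) hc.le
    linarith [hDge n]
  have hpA : p ∈ A := hγA 0 (Set.mem_Ici.mpr (le_refl 0))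
  refine ⟨σF, ?_, ?_⟩
  · intro s hs t ht
    rw [Set.mem_Ici] at hs ht
    obtain ⟨N1, hN1⟩ := hev s hs
    obtain ⟨N2, hN2⟩ := hev t ht
    have htd : Filter.Tendsto (fun n => dist (ss n s) (ss n t)) Filter.atTop
        (nhds (dist (σF s) (σF t))) := (hσF s hs).dist (hσF t ht)
    have heq : ∀ᶠ n in Filter.atTop, dist (ss n s) (ss n t) = |s - t| := by
      filter_upwards [Filter.eventually_ge_atTop (max N1 N2)] with n hn
      exact hssgeo n s ⟨hs, hN1 n (le_trans (le_max_left _ _) hn)⟩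
        t ⟨ht, hN2 n (le_trans (le_max_right _ _) hn)⟩
    exact tendsto_nhds_unique (Filter.Tendsto.congr' heq htd) tendsto_const_nhds
  · intro t ht
    rw [Set.mem_Ici] at ht
    obtain ⟨N, hN⟩ := hev t ht
    refine hclosed.mem_of_tendsto (hσF t ht) ?_
    filter_upwards [Filter.eventually_ge_atTop N] with n hn
    have hsub : ss n '' Set.Icc 0 (D n) ⊆ A :=
      hconv p hpA (y n) (hyA n) _ (hsegGeo n)
    exact hsub ⟨t, ⟨ht, hN n hn⟩, rfl⟩
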